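/- If r is odd, then for any two sequences s, t ∈ Σⁿ with edit(s,t) ≤ 2r−1, there exists a sequence v ∈ Σⁿ with edit(s,v) ≤ r−1 and edit(t,v) ≤ r. -/

import Mathlib

/-- Cost structure for edit distance (formerly `Levenshtein.Cost` in Mathlib). -/
structure Levenshtein.Cost (α β δ : Type*) where
  delete : α → δ
  insert : β → δ
  substitute : α → β → δ

/-- Unit costs (formerly `Levenshtein.defaultCost` in Mathlib). -/
def Levenshtein.defaultCost {α : Type*} [DecidableEq α] : Levenshtein.Cost α α ℕ where
  delete _ := 1
  insert _ := 1
  substitute a b := if a = b then 0 else 1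

/-- Weighted Levenshtein distance (formerly `levenshtein` in Mathlib), via its defining
recursion. -/
def levenshtein {α β δ : Type*} [AddZeroClass δ] [Min δ] (C : Levenshtein.Cost α β δ) :
    List α → List β → δ
  | [], [] => 0
  | [], y :: ys => C.insert y + levenshtein C [] ys
  | x :: xs, [] => C.delete x + levenshtein C xs []
  | x :: xs, y :: ys =>
    min (C.delete x + levenshtein C xs (y :: ys))
      (min (C.insert y + levenshtein C (x :: xs) ys) (C.substitute x y + levenshtein C xs ys))

/-- Edit (Levenshtein) distance between two length-`n` sequences over `α`. -/
def editDist {α : Type*} [DecidableEq α] {n : ℕ} (s t : Fin n → α) : ℕ :=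
  levenshtein Levenshtein.defaultCost (List.ofFn s) (List.ofFn t)

/-- `f` is a `(d₁, d₂)`-sensitive bucketing function. -/
def IsSensitive {α B : Type*} [DecidableEq α] {n : ℕ} (d₁ d₂ : ℕ)
    (f : (Fin n → α) → Set B) : Prop :=
  (∀ s t : Fin n → α, editDist s t ≤ d₁ → (f s ∩ f t).Nonempty) ∧
  (∀ s t : Fin n → α, d₂ ≤ editDist s t → f s ∩ f t = ∅)

@[simp] theorem levenshtein_nil_nil {α β δ : Type*} [AddZeroClass δ] [Min δ]
    (C : Levenshtein.Cost α β δ) : levenshtein C [] [] = 0 := by rw [levenshtein]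

@[simp] theorem levenshtein_nil_cons {α β δ : Type*} [AddZeroClass δ] [Min δ]
    (C : Levenshtein.Cost α β δ) (y : β) (ys : List β) :
    levenshtein C [] (y :: ys) = C.insert y + levenshtein C [] ys := by rw [levenshtein]

@[simp] theorem levenshtein_cons_nil {α β δ : Type*} [AddZeroClass δ] [Min δ]
    (C : Levenshtein.Cost α β δ) (x : α) (xs : List α) :
    levenshtein C (x :: xs) [] = C.delete x + levenshtein C xs [] := by rw [levenshtein]

theorem levenshtein_cons_cons {α β δ : Type*} [AddZeroClass δ] [Min δ]
    (C : Levenshtein.Cost α β δ) (x : α) (xs : List α) (y : β) (ys : List β) :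
    levenshtein C (x :: xs) (y :: ys) =
      min (C.delete x + levenshtein C xs (y :: ys))
        (min (C.insert y + levenshtein C (x :: xs) ys) (C.substitute x y + levenshtein C xs ys)) := by
  rw [levenshtein]

@[simp] theorem Levenshtein.defaultCost_delete {α : Type*} [DecidableEq α] (a : α) :
    (Levenshtein.defaultCost : Levenshtein.Cost α α ℕ).delete a = 1 := rfl

@[simp] theorem Levenshtein.defaultCost_insert {α : Type*} [DecidableEq α] (a : α) :
    (Levenshtein.defaultCost : Levenshtein.Cost α α ℕ).insert a = 1 := rfl

@[simp] theorem Levenshtein.defaultCost_substitute {α : Type*} [DecidableEq α] (a b : α) :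
    (Levenshtein.defaultCost : Levenshtein.Cost α α ℕ).substitute a b = if a = b then 0 else 1 := rfl


section helpers
variable {α : Type*} [DecidableEq α]

local notation "ld" => levenshtein (Levenshtein.defaultCost (α := α))

lemma lev_nil_left' : ∀ l : List α, ld [] l = l.length := by
  intro l; induction l with
  | nil => simp
  | cons a l ih => simp [ih]; omega

lemma lev_nil_right' : ∀ l : List α, ld l [] = l.length := by
  intro l; induction l with
  | nil => simp
  | cons a l ih => simp [ih]; omega

lemma lev_le_del (a : α) (u w : List α) : ld (a::u) w ≤ 1 + ld u w := by
  cases w with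
  | nil => simp
  | cons b w =>
      simp only [levenshtein_cons_cons, Levenshtein.defaultCost_delete]
      exact min_le_left _ _

lemma lev_le_ins (u : List α) (b : α) (w : List α) : ld u (b::w) ≤ 1 + ld u w := by
  cases u with
  | nil => simp
  | cons a u =>
      simp only [levenshtein_cons_cons, Levenshtein.defaultCost_insert]
      exact le_trans (min_le_right _ _) (min_le_left _ _)

lemma lev_le_sub (a b : α) (u w : List α) :
    ld (a::u) (b::w) ≤ (if a = b then 0 else 1) + ld u w := by
  simp only [levenshtein_cons_cons, Levenshtein.defaultCost_substitute]
  exact le_trans (min_le_right _ _) (min_le_right _ _)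

lemma lev_le_cons (a : α) (u w : List α) : ld (a::u) (a::w) ≤ ld u w := by
  have := lev_le_sub a a u w
  simpa using this

lemma lev_self : ∀ l : List α, ld l l = 0 := by
  intro l; induction l with
  | nil => simp
  | cons a l ih => have := lev_le_cons a l l; omega

lemma lev_le_sub' (a b : α) (u w : List α) : ld (a::u) (b::w) ≤ 1 + ld u w := by
  refine le_trans (lev_le_sub a b u w) ?_
  split <;> omega

lemma lev_drop_right : ∀ (j : ℕ) (l : List α), ld l (l.drop j) ≤ j := by
  intro j
  induction j with
  | zero => intro l; simp [lev_self]
  | succ j ih =>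
      intro l
      cases l with
      | nil => simp
      | cons a l =>
          have h1 := lev_le_del a l (l.drop j)
          have h2 := ih l
          simp only [List.drop_succ_cons]
          omega

lemma lev_drop_left : ∀ (j : ℕ) (l : List α), ld (l.drop j) l ≤ j := by
  intro j
  induction j with
  | zero => intro l; simp [lev_self]
  | succ j ih =>
      intro l
      cases l with
      | nil => simp
      | cons a l =>
          have h1 := lev_le_ins (l.drop j) a l
          have h2 := ih l
          simp only [List.drop_succ_cons]
          omega

end helpers

section key
variable {α : Type*} [DecidableEq α]

local notation "ld" => levenshtein (Levenshtein.defaultCost (α := α))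

theorem lev_key : ∀ s t : List α, ∃ m c : ℕ,
    ld s t = 2*m + c + ((s.length - t.length) + (t.length - s.length)) ∧
    ∀ a b g : ℕ, a ≤ m → b ≤ c → g ≤ (s.length - t.length) + (t.length - s.length) →
      ∃ v : List α,
        (s.length ≤ t.length → v.length = s.length + g) ∧
        (t.length ≤ s.length → v.length = s.length - g) ∧
        ld s v ≤ 2*a + b + g ∧
        ld t v ≤ 2*(m-a) + ((c-b) + ((s.length - t.length) + (t.length - s.length) - g)) := by
  intro s
  induction s with
  | nil =>
      intro t
      refine ⟨0, 0, by simp [lev_nil_left'], ?_⟩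
      intro a b g ha hb hg
      simp only [List.length_nil] at *
      refine ⟨t.drop (t.length - g), ?_, ?_, ?_, ?_⟩
      · intro _; have := List.length_drop (i := (t.length - g)) (l := t); omega
      · intro h; have := List.length_drop (i := (t.length - g)) (l := t); omega
      · have h1 := lev_nil_left' (t.drop (t.length - g))
        have := List.length_drop (i := (t.length - g)) (l := t); omega
      · have := lev_drop_right (t.length - g) t; omega
  | cons x xs ihs =>
      intro t
      induction t with
      | nil =>
          refine ⟨0, 0, by simp [lev_nil_right']; omega, ?_⟩
          intro a b g ha hb hg
          simp only [List.length_nil, List.length_cons] at *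
          refine ⟨(x::xs).drop g, ?_, ?_, ?_, ?_⟩
          · intro h; omega
          · intro _; have := List.length_drop (i := g) (l := (x::xs)); simpa using this
          · have := lev_drop_right g (x::xs); omega
          · have h1 := lev_nil_left' ((x::xs).drop g)
            have := List.length_drop (i := g) (l := (x::xs))
            simp only [List.length_cons] at *
            omega
      | cons y ys iht =>
          have h3 : ld (x::xs) (y::ys) = 1 + ld xs (y::ys) ∨
              ld (x::xs) (y::ys) = 1 + ld (x::xs) ys ∨
              ld (x::xs) (y::ys) = (if x = y then 0 else 1) + ld xs ys := by
            have := levenshtein_cons_cons (C := Levenshtein.defaultCost) x xs y ys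
            simp only [Levenshtein.defaultCost_delete, Levenshtein.defaultCost_insert,
              Levenshtein.defaultCost_substitute] at this
            omega
          rcases h3 with h3 | h3 | h3
          · -- delete branch
            obtain ⟨m, c, he, hmid⟩ := ihs (y::ys)
            simp only [List.length_cons] at *
            rcases le_or_gt (ys.length + 1) xs.length with hl | hl
            · -- t shorter: extra unpaired deletion
              refine ⟨m, c, by omega, ?_⟩
              intro a b g ha hb hg
              cases g with
              | zero =>
                  obtain ⟨v, hv1, hv2, hv3, hv4⟩ := hmid a b 0 ha hb (by omega)
                  have hlen : v.length = xs.length := by omega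
                  have e3 := lev_le_cons x xs v
                  have e4 := lev_le_ins (y::ys) x v
                  refine ⟨x::v, ?_, ?_, ?_, ?_⟩ <;> (try simp only [List.length_cons]) <;> omega
              | succ g =>
                  obtain ⟨v, hv1, hv2, hv3, hv4⟩ := hmid a b g ha hb (by omega)
                  have hlen : v.length = xs.length - g := by omega
                  have e3 := lev_le_del x xs v
                  refine ⟨v, ?_, ?_, ?_, ?_⟩ <;> omega
            · -- t not shorter: this deletion pairs with an insertion
              refine ⟨m + 1, c, by omega, ?_⟩
              intro a b g ha hb hg
              rcases le_or_gt a m with ham | ham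
              · obtain ⟨v, hv1, hv2, hv3, hv4⟩ := hmid a b g ham hb (by omega)
                have hlen : v.length = xs.length + g := by omega
                have e3 := lev_le_cons x xs v
                have e4 := lev_le_ins (y::ys) x v
                refine ⟨x::v, ?_, ?_, ?_, ?_⟩ <;> (try simp only [List.length_cons]) <;> omega
              · obtain ⟨v, hv1, hv2, hv3, hv4⟩ := hmid m b (g+1) (le_refl m) hb (by omega)
                have hlen : v.length = xs.length + (g+1) := by omega
                have e3 := lev_le_del x xs v
                refine ⟨v, ?_, ?_, ?_, ?_⟩ <;> omega
          · -- insert branch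
            obtain ⟨m, c, he, hmid⟩ := iht
            simp only [List.length_cons] at *
            rcases le_or_gt (xs.length + 1) ys.length with hl | hl
            · -- s shorter: extra unpaired insertion
              refine ⟨m, c, by omega, ?_⟩
              intro a b g ha hb hg
              cases g with
              | zero =>
                  obtain ⟨v, hv1, hv2, hv3, hv4⟩ := hmid a b 0 ha hb (by omega)
                  have hlen : v.length = xs.length + 1 := by omega
                  have e4 := lev_le_del y ys v
                  refine ⟨v, ?_, ?_, ?_, ?_⟩ <;> omega
              | succ g =>
                  obtain ⟨v, hv1, hv2, hv3, hv4⟩ := hmid a b g ha hb (by omega)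
                  have hlen : v.length = xs.length + 1 + g := by omega
                  have e3 := lev_le_ins (x::xs) y v
                  have e4 := lev_le_cons y ys v
                  refine ⟨y::v, ?_, ?_, ?_, ?_⟩ <;> (try simp only [List.length_cons]) <;> omega
            · -- this insertion pairs with a deletion
              refine ⟨m + 1, c, by omega, ?_⟩
              intro a b g ha hb hg
              rcases le_or_gt a m with ham | ham
              · obtain ⟨v, hv1, hv2, hv3, hv4⟩ := hmid a b g ham hb (by omega)
                have hlen : v.length = xs.length + 1 - g := by omega
                have e4 := lev_le_del y ys v
                refine ⟨v, ?_, ?_, ?_, ?_⟩ <;> omega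
              · obtain ⟨v, hv1, hv2, hv3, hv4⟩ := hmid m b (g+1) (le_refl m) hb (by omega)
                have hlen : v.length = xs.length + 1 - (g+1) := by omega
                have e3 := lev_le_ins (x::xs) y v
                have e4 := lev_le_cons y ys v
                refine ⟨y::v, ?_, ?_, ?_, ?_⟩ <;> (try simp only [List.length_cons]) <;> omega
          · -- substitute branch
            obtain ⟨m, c, he, hmid⟩ := ihs ys
            simp only [List.length_cons] at *
            by_cases hxy : x = y
            · subst hxy
              simp only [if_pos rfl, eq_self_iff_true, if_true] at h3
              refine ⟨m, c, by omega, ?_⟩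
              intro a b g ha hb hg
              obtain ⟨v, hv1, hv2, hv3, hv4⟩ := hmid a b g ha hb (by omega)
              have e3 := lev_le_cons x xs v
              have e4 := lev_le_cons x ys v
              refine ⟨x::v, ?_, ?_, ?_, ?_⟩ <;> (try simp only [List.length_cons]) <;> omega
            · simp only [if_neg hxy] at h3
              refine ⟨m, c + 1, by omega, ?_⟩
              intro a b g ha hb hg
              rcases le_or_gt b c with hbc | hbc
              · obtain ⟨v, hv1, hv2, hv3, hv4⟩ := hmid a b g ha hbc (by omega)
                have e3 := lev_le_cons x xs v
                have e4 := lev_le_sub' y x ys v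
                refine ⟨x::v, ?_, ?_, ?_, ?_⟩ <;> (try simp only [List.length_cons]) <;> omega
              · obtain ⟨v, hv1, hv2, hv3, hv4⟩ := hmid a c g ha (le_refl c) (by omega)
                have e3 := lev_le_sub' x y xs v
                have e4 := lev_le_cons y ys v
                refine ⟨y::v, ?_, ?_, ?_, ?_⟩ <;> (try simp only [List.length_cons]) <;> omega

end key

theorem stmt10 {α : Type*} [Fintype α] [DecidableEq α] (hα : 1 < Fintype.card α)
    {n : ℕ} (r : ℕ) (hr : Odd r) (s t : Fin n → α) (h : editDist s t ≤ 2 * r - 1) :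
    ∃ v : Fin n → α, editDist s v ≤ r - 1 ∧ editDist t v ≤ r := by
  obtain ⟨q, hq⟩ := hr
  obtain ⟨m, c, he, hmid⟩ := lev_key (List.ofFn s) (List.ofFn t)
  simp only [List.length_ofFn] at he hmid
  rw [editDist] at h
  have habc : ∃ a b : ℕ, a ≤ m ∧ b ≤ c ∧ 2*a + b ≤ r - 1 ∧ 2*(m-a) + (c-b) ≤ r := by
    rcases le_or_gt (2*m + c) r with h1 | h1
    · exact ⟨0, 0, by omega, by omega, by omega, by omega⟩
    · rcases le_or_gt m q with h2 | h2
      · exact ⟨0, 2*m + c - r, by omega, by omega, by omega, by omega⟩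
      · exact ⟨m - q, c - 1, by omega, by omega, by omega, by omega⟩
  obtain ⟨a, b, ha, hb, hra, hrb⟩ := habc
  obtain ⟨v, hv1, hv2, hv3, hv4⟩ := hmid a b 0 ha hb (by omega)
  have hlen : v.length = n := by omega
  refine ⟨fun i => v.get (Fin.cast hlen.symm i), ?_, ?_⟩ <;>
  · rw [editDist]
    have hofn : List.ofFn (fun i : Fin n => v.get (Fin.cast hlen.symm i)) = v := by
      apply List.ext_get (by simp [hlen])
      intro i h1 h2
      simp
    rw [hofn]
    omega
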